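/- For every positive integer a and every positive integer s, there exist S₂-full sets F₁ < F₂ < ... < F_s such that F_i ⊆ [a, τ(s, 2a+s-1) - 1] for every i ∈ [s]. -/

import Mathlib

open Finset

/-- `F < G` for finite sets: every element of `F` is below every element of `G`. -/
def FinsetLT (F G : Finset ℕ) : Prop := ∀ x ∈ F, ∀ y ∈ G, x < y

/-- Membership in the Schreier family `S₁`: a finite set of positive integers
with `|F| ≤ min F` (the empty set belongs trivially). -/
def IsSchreier (F : Finset ℕ) : Prop := ∀ n ∈ F, 0 < n ∧ F.card ≤ n

/-- `F` is a union of at most `d` sets `F₁ < F₂ < ⋯`, each in the family `P`. -/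
def Combine (P : Finset ℕ → Prop) (d : ℕ) (F : Finset ℕ) : Prop :=
  ∃ L : List (Finset ℕ), L.length ≤ d ∧ L.Pairwise FinsetLT ∧
    (∀ G ∈ L, P G) ∧ L.foldr (· ∪ ·) ∅ = F

/-- Membership in `S₂`. -/
def MemS2 (F : Finset ℕ) : Prop :=
  F = ∅ ∨ ∃ h : F.Nonempty, Combine IsSchreier (F.min' h) F

/-- Membership in `S₃`. -/
def MemS3 (F : Finset ℕ) : Prop :=
  F = ∅ ∨ ∃ h : F.Nonempty, Combine MemS2 (F.min' h) F

/-- `F` is a maximal member of the family `P` (among sets of positive integers). -/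
def IsFull (P : Finset ℕ → Prop) (F : Finset ℕ) : Prop :=
  P F ∧ ∀ n : ℕ, 0 < n → n ∉ F → ¬ P (insert n F)

/-- `F ∈ full_{a,b}(P)`. -/
def FullAB (P : Finset ℕ → Prop) (a b : ℕ) (F : Finset ℕ) : Prop :=
  P F ∧ F ⊆ Finset.Icc a b ∧ a ∈ F ∧
    ∀ n ∈ Finset.Icc a b, n ∉ F → ¬ P (insert n F)

/-- The tower function `τ`. -/
def tau : ℕ → ℕ → ℕ
  | 0, a => a
  | i + 1, a => 2 ^ tau i a

/-- `E₁(F)`: `F` itself if `|F| ≤ min F`, otherwise the `min F` smallest elements of `F`. -/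
def E1 (F : Finset ℕ) : Finset ℕ :=
  if h : F.Nonempty then ((F.sort (· ≤ ·)).take (F.min' h)).toFinset else ∅

/-- Union of the first `i` greedy pieces. -/
def Eacc : ℕ → Finset ℕ → Finset ℕ
  | 0, _ => ∅
  | i + 1, F => Eacc i F ∪ E1 (F \ Eacc i F)

/-- The `i`-th greedy piece `E_i(F)` (for `i ≥ 1`). -/
def Epiece (i : ℕ) (F : Finset ℕ) : Finset ℕ := E1 (F \ Eacc (i - 1) F)

open Classical in
/-- `E₁*(F)`: `F` itself if `F ∈ S₂`, otherwise `E₁(F) ∪ ⋯ ∪ E_{min F}(F)`. -/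
noncomputable def E1star (F : Finset ℕ) : Finset ℕ :=
  if MemS2 F then F
  else if h : F.Nonempty then Eacc (F.min' h) F else ∅

/-- Union of the first `i` starred greedy pieces. -/
noncomputable def EaccStar : ℕ → Finset ℕ → Finset ℕ
  | 0, _ => ∅
  | i + 1, F => EaccStar i F ∪ E1star (F \ EaccStar i F)

/-- The `i`-th starred greedy piece `E_i*(F)` (for `i ≥ 1`). -/
noncomputable def EpieceStar (i : ℕ) (F : Finset ℕ) : Finset ℕ :=
  E1star (F \ EaccStar (i - 1) F)

lemma mem_foldr_union {L : List (Finset ℕ)} {x : ℕ} :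
    x ∈ L.foldr (· ∪ ·) ∅ ↔ ∃ P ∈ L, x ∈ P := by
  induction L with
  | nil => simp
  | cons P L ih => simp [ih]

lemma count_lemma : ∀ (L : List (Finset ℕ)), L.Pairwise FinsetLT →
    (∀ P ∈ L, IsSchreier P) → ∀ m, 1 ≤ m →
    (∀ x ∈ L.foldr (· ∪ ·) ∅, x ≤ m + ((L.foldr (· ∪ ·) ∅).filter (· < x)).card
        ∨ ∀ y ∈ L.foldr (· ∪ ·) ∅, y ≤ x) →
    (L.foldr (· ∪ ·) ∅).card ≤ (2 ^ L.length - 1) * m := by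
  intro L
  induction L with
  | nil => simp
  | cons P L ih =>
    intro hpw hsch m hm hcond
    have hpwT := hpw.of_cons
    have hhead : ∀ Q ∈ L, FinsetLT P Q := fun Q hQ => List.rel_of_pairwise_cons hpw hQ
    set U := L.foldr (· ∪ ·) ∅ with hU
    have hGU : (P :: L).foldr (· ∪ ·) ∅ = P ∪ U := rfl
    have hPU : ∀ y ∈ U, ∀ x ∈ P, x < y := by
      intro y hy x hx
      obtain ⟨Q, hQ, hyQ⟩ := mem_foldr_union.1 hy
      exact hhead Q hQ x hx y hyQ
    have hdisj : Disjoint P U := by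
      rw [Finset.disjoint_left]
      intro x hx hxU
      exact absurd (hPU x hxU x hx) (lt_irrefl x)
    have hcard : (P ∪ U).card = P.card + U.card := card_union_of_disjoint hdisj
    have h2 : (1:ℕ) ≤ 2 ^ L.length := Nat.one_le_two_pow
    rcases P.eq_empty_or_nonempty with hP | hP
    · subst hP
      simp only [hGU, Finset.empty_union] at *
      have := ih hpwT (fun Q hQ => hsch Q (List.mem_cons_of_mem _ hQ)) m hm hcond
      calc U.card ≤ (2 ^ L.length - 1) * m := this
        _ ≤ (2 ^ (List.length ((∅ : Finset ℕ) :: L)) - 1) * m := by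
            apply Nat.mul_le_mul_right
            have : 2 ^ L.length ≤ 2 ^ (L.length + 1) := Nat.pow_le_pow_right (by norm_num) (by omega)
            simp only [List.length_cons]
            omega
    · set x := P.min' hP with hx
      have hxP : x ∈ P := P.min'_mem hP
      have hxG : x ∈ P ∪ U := Finset.mem_union_left _ hxP
      have hfilt : (P ∪ U).filter (· < x) = ∅ := by
        rw [Finset.filter_eq_empty_iff]
        intro y hy
        rcases Finset.mem_union.1 hy with hyP | hyU
        · exact not_lt.2 (P.min'_le y hyP)
        · exact not_lt.2 (le_of_lt (hPU y hyU x hxP))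
      rcases hcond x (hGU ▸ hxG) with hxle | hxmax
      · rw [hGU, hfilt] at hxle
        simp only [Finset.card_empty, Nat.add_zero] at hxle
        -- x ≤ m
        have hPcard : P.card ≤ m := le_trans (hsch P (List.mem_cons_self ..) x hxP).2 hxle
        -- condition for U with parameter m + P.card
        have hcondU : ∀ y ∈ U, y ≤ (m + P.card) + (U.filter (· < y)).card
            ∨ ∀ z ∈ U, z ≤ y := by
          intro y hy
          rcases hcond y (by rw [hGU]; exact Finset.mem_union_right _ hy) with h1 | h1
          · left
            rw [hGU] at h1
            have hPy : P.filter (· < y) = P := by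
              rw [Finset.filter_eq_self]
              intro z hz; exact hPU y hy z hz
            rw [Finset.filter_union, hPy] at h1
            have : (P ∪ U.filter (· < y)).card = P.card + (U.filter (· < y)).card := by
              apply card_union_of_disjoint
              exact Finset.disjoint_of_subset_right (Finset.filter_subset _ _) hdisj
            omega
          · right
            intro z hz
            exact h1 z (by rw [hGU]; exact Finset.mem_union_right _ hz)
        have hUcard := ih hpwT (fun Q hQ => hsch Q (List.mem_cons_of_mem _ hQ))
          (m + P.card) (by omega) hcondU
        have hstep : U.card ≤ (2 ^ L.length - 1) * (2 * m) :=
          le_trans hUcard (Nat.mul_le_mul_left _ (by omega))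
        rw [hGU, hcard]
        simp only [List.length_cons]
        have h2' : (2:ℕ) ^ (L.length + 1) = 2 * 2 ^ L.length := by ring
        have : P.card + U.card ≤ m + (2 ^ L.length - 1) * (2 * m) := by omega
        calc P.card + U.card ≤ m + (2 ^ L.length - 1) * (2 * m) := this
          _ ≤ (2 ^ (L.length + 1) - 1) * m := by
              rw [h2']
              have e1 : (2 ^ L.length - 1) * (2 * m) = 2 * 2 ^ L.length * m - 2 * m := by
                rw [Nat.sub_mul]; ring_nf
              have e2 : 2 * 2 ^ L.length * m ≥ 2 * m := by
                have := Nat.mul_le_mul_right m (by omega : 2 ≤ 2 * 2 ^ L.length)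
                omega
              rw [e1, Nat.sub_mul]
              omega
      · -- x is the maximum: everything ≤ x, but x is min of P, so P ∪ U = {x}
        have hUempty : U = ∅ := by
          rw [Finset.eq_empty_iff_forall_notMem]
          intro y hy
          have h1 := hPU y hy x hxP
          have h2 := hxmax y (by rw [hGU]; exact Finset.mem_union_right _ hy)
          omega
        have hPsub : P ⊆ {x} := by
          intro y hy
          have h1 := P.min'_le y hy
          have h2 := hxmax y (by rw [hGU]; exact Finset.mem_union_left _ hy)
          simp only [Finset.mem_singleton]
          omega
        rw [hGU, hUempty, Finset.union_empty]
        have : P.card ≤ 1 := le_trans (Finset.card_le_card hPsub) (by simp)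
        have h3 : (1:ℕ) ≤ 2 ^ (List.length (P :: L)) - 1 := by
          simp only [List.length_cons]
          have : (2:ℕ) ≤ 2 ^ (L.length + 1) := by
            calc (2:ℕ) = 2^1 := rfl
            _ ≤ 2 ^ (L.length + 1) := Nat.pow_le_pow_right (by norm_num) (by omega)
          omega
        calc P.card ≤ 1 := this
          _ ≤ (2 ^ (List.length (P :: L)) - 1) * m := Nat.one_le_iff_ne_zero.2 (by positivity)


lemma two_le_two_pow {m : ℕ} (hm : 1 ≤ m) : 2 ≤ 2 ^ m := by
  calc (2:ℕ) = 2^1 := rfl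
    _ ≤ 2^m := Nat.pow_le_pow_right (by norm_num) hm

lemma m_le_interval_top {m : ℕ} (hm : 1 ≤ m) : m ≤ 2 ^ m * m - 1 := by
  have := Nat.mul_le_mul_right m (two_le_two_pow hm)
  omega

lemma interval_nonempty {m : ℕ} (hm : 1 ≤ m) : (Icc m (2 ^ m * m - 1)).Nonempty :=
  ⟨m, Finset.mem_Icc.2 ⟨le_refl m, m_le_interval_top hm⟩⟩

lemma interval_min' {m : ℕ} (hm : 1 ≤ m) :
    (Icc m (2 ^ m * m - 1)).min' (interval_nonempty hm) = m := by
  apply le_antisymm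
  · exact Finset.min'_le _ _ (Finset.mem_Icc.2 ⟨le_refl _, m_le_interval_top hm⟩)
  · have := (Icc m (2 ^ m * m - 1)).min'_mem (interval_nonempty hm)
    exact (Finset.mem_Icc.1 this).1

lemma interval_memS2 {m : ℕ} (hm : 1 ≤ m) : MemS2 (Icc m (2 ^ m * m - 1)) := by
  right
  refine ⟨interval_nonempty hm, ?_⟩
  rw [interval_min' hm]
  refine ⟨(List.range m).map fun k => Icc (2 ^ k * m) (2 ^ (k+1) * m - 1), by simp, ?_, ?_, ?_⟩
  · rw [List.pairwise_map]
    apply List.Pairwise.imp_of_mem ?_ (List.pairwise_lt_range ..)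
    intro k l _ _ hkl x hx y hy
    rw [Finset.mem_Icc] at hx hy
    have h1 : 2 ^ (k+1) ≤ 2 ^ l := Nat.pow_le_pow_right (by norm_num) hkl
    have h2 : 2 ^ (k+1) * m ≤ 2 ^ l * m := Nat.mul_le_mul_right m h1
    have h3 : 0 < 2 ^ (k+1) * m := by positivity
    omega
  · intro G hG
    simp only [List.mem_map, List.mem_range] at hG
    obtain ⟨k, hk, rfl⟩ := hG
    intro n hn
    rw [Finset.mem_Icc] at hn
    have hpos : 0 < 2 ^ k * m := by positivity
    constructor
    · omega
    · rw [Nat.card_Icc]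
      have : 2 ^ (k+1) * m = 2 * (2 ^ k * m) := by ring
      omega
  · ext x
    rw [mem_foldr_union]
    simp only [List.mem_map, List.mem_range, Finset.mem_Icc]
    constructor
    · rintro ⟨P, ⟨k, hk, rfl⟩, hx⟩
      rw [Finset.mem_Icc] at hx
      have h1 : 2 ^ (k+1) ≤ 2 ^ m := Nat.pow_le_pow_right (by norm_num) hk
      have h2 : 2 ^ (k+1) * m ≤ 2 ^ m * m := Nat.mul_le_mul_right m h1
      have h3 : m ≤ 2 ^ k * m := by
        calc m = 1 * m := (Nat.one_mul m).symm
          _ ≤ 2 ^ k * m := Nat.mul_le_mul_right m Nat.one_le_two_pow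
      constructor
      · exact le_trans h3 hx.1
      · omega
    · rintro ⟨hmx, hxM⟩
      set q := x / m with hq
      have hm0 : 0 < m := hm
      have hq1 : 1 ≤ q := (Nat.one_le_div_iff hm0).2 hmx
      set k := Nat.log 2 q with hk
      have hlow : 2 ^ k ≤ q := Nat.pow_log_le_self 2 (by omega)
      have hhigh : q < 2 ^ (k+1) := Nat.lt_pow_succ_log_self (by norm_num) q
      refine ⟨_, ⟨k, ?_, rfl⟩, ?_⟩
      · -- k < m
        have hqlt : q < 2 ^ m := by
          rw [hq, Nat.div_lt_iff_lt_mul hm0]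
          have : 0 < 2 ^ m * m := by positivity
          omega
        have : 2 ^ k < 2 ^ m := lt_of_le_of_lt hlow hqlt
        exact (Nat.pow_lt_pow_iff_right (by norm_num)).1 this
      · rw [Finset.mem_Icc]
        constructor
        · calc 2 ^ k * m ≤ q * m := Nat.mul_le_mul_right m hlow
            _ ≤ x := by rw [hq]; exact Nat.div_mul_le_self x m
        · have h1 : x < (q + 1) * m := by
            have hmod := Nat.div_add_mod x m
            rw [← hq] at hmod
            have hlt := Nat.mod_lt x hm0
            have hexp : (q + 1) * m = m * q + m := by ring
            linarith
          have h2 : (q + 1) * m ≤ 2 ^ (k+1) * m := Nat.mul_le_mul_right m (by omega)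
          omega

lemma contradiction_final {m : ℕ} (hm : 1 ≤ m) (L : List (Finset ℕ))
    (hpw : L.Pairwise FinsetLT) (hsch : ∀ P ∈ L, IsSchreier P)
    (hdm : L.length ≤ m) (hn : ∀ x ∈ L.foldr (· ∪ ·) ∅, x ≤ m + ((L.foldr (· ∪ ·) ∅).filter (· < x)).card
        ∨ ∀ y ∈ L.foldr (· ∪ ·) ∅, y ≤ x)
    (hcardG : (L.foldr (· ∪ ·) ∅).card = 2 ^ m * m - m + 1) : False := by
  have hb := count_lemma L hpw hsch m hm hn
  have h1 : (2:ℕ) ^ L.length ≤ 2 ^ m := Nat.pow_le_pow_right (by norm_num) hdm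
  have h2 : (2 ^ L.length - 1) * m ≤ (2 ^ m - 1) * m := Nat.mul_le_mul_right m (by omega)
  have h3 : (2 ^ m - 1) * m = 2 ^ m * m - m := by rw [Nat.sub_mul, Nat.one_mul]
  have h4 : m ≤ 2 ^ m * m := by
    calc m = 1 * m := (Nat.one_mul m).symm
      _ ≤ 2 ^ m * m := Nat.mul_le_mul_right m Nat.one_le_two_pow
  omega

lemma interval_full {m : ℕ} (hm : 1 ≤ m) : IsFull MemS2 (Icc m (2 ^ m * m - 1)) := by
  refine ⟨interval_memS2 hm, ?_⟩
  intro n hn hnotin hmem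
  set I := Icc m (2 ^ m * m - 1) with hI
  have hmI : m ∈ I := Finset.mem_Icc.2 ⟨le_refl _, m_le_interval_top hm⟩
  set G := insert n I with hG
  have hmG : m ∈ G := Finset.mem_insert_of_mem hmI
  rcases hmem with hemp | ⟨h, L, hlen, hpw, hsch, hfold⟩
  · rw [hemp] at hmG; simp at hmG
  have hnIcc : ∀ _ : m ≤ n, 2 ^ m * m - 1 < n := by
    intro h1
    have h2 := hnotin
    rw [hI, Finset.mem_Icc] at h2
    omega
  -- L.length ≤ m
  have hdm : L.length ≤ m := le_trans hlen (Finset.min'_le _ _ hmG)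
  -- the condition
  have hcond : ∀ x ∈ G, x ≤ m + (G.filter (· < x)).card ∨ ∀ y ∈ G, y ≤ x := by
    intro x hx
    rcases Finset.mem_insert.1 hx with rfl | hxI
    · -- x = n
      by_cases hnm : x < m
      · left; omega
      · right
        push_neg at hnm
        have hbig : 2 ^ m * m - 1 < x := hnIcc hnm
        intro y hy
        rcases Finset.mem_insert.1 hy with rfl | hyI
        · exact le_refl _
        · have := (Finset.mem_Icc.1 hyI).2; omega
    · left
      have hxm := Finset.mem_Icc.1 hxI
      have hsub : Icc m (x - 1) ⊆ G.filter (· < x) := by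
        intro y hy
        have hy' := Finset.mem_Icc.1 hy
        rw [Finset.mem_filter]
        refine ⟨Finset.mem_insert_of_mem (Finset.mem_Icc.2 ⟨hy'.1, ?_⟩), ?_⟩ <;> omega
      have hcard := Finset.card_le_card hsub
      rw [Nat.card_Icc] at hcard
      omega
  have hcardG : G.card = 2 ^ m * m - m + 1 := by
    rw [hG, Finset.card_insert_of_notMem hnotin, hI, Nat.card_Icc]
    have h4 : 2 * m ≤ 2 ^ m * m := Nat.mul_le_mul_right m (two_le_two_pow hm)
    omega
  rw [← hfold] at hcond hcardG
  exact contradiction_final hm L hpw hsch hdm hcond hcardG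

def mseq (a : ℕ) : ℕ → ℕ
  | 0 => a
  | i + 1 => 2 ^ (mseq a i) * mseq a i

lemma two_le_two_pow' {m : ℕ} (hm : 1 ≤ m) : 2 ≤ 2 ^ m :=
  by calc (2:ℕ) = 2^1 := rfl
       _ ≤ 2^m := Nat.pow_le_pow_right (by norm_num) hm

lemma mseq_lt_succ {a : ℕ} (ha : 1 ≤ a) : ∀ i, 1 ≤ mseq a i ∧ mseq a i < mseq a (i + 1) := by
  intro i
  induction i with
  | zero =>
    constructor
    · exact ha
    · show a < 2 ^ a * a
      have := Nat.mul_le_mul_right a (two_le_two_pow' ha)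
      omega
  | succ j ih =>
    obtain ⟨h1, h2⟩ := ih
    have h1' : 1 ≤ mseq a (j + 1) := by omega
    refine ⟨h1', ?_⟩
    show mseq a (j+1) < 2 ^ (mseq a (j+1)) * mseq a (j+1)
    have := Nat.mul_le_mul_right (mseq a (j+1)) (two_le_two_pow' h1')
    omega

lemma mseq_mono {a : ℕ} (ha : 1 ≤ a) : ∀ {i j}, i ≤ j → mseq a i ≤ mseq a j := by
  intro i j hij
  induction j with
  | zero => simp_all
  | succ k ih =>
    rcases Nat.lt_succ_iff_lt_or_eq.1 (Nat.lt_succ_of_le hij) with h | h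
    · exact le_trans (ih (by omega)) (le_of_lt (mseq_lt_succ ha k).2)
    · exact h ▸ le_refl _

lemma two_mul_le_two_pow : ∀ {m : ℕ}, 1 ≤ m → 2 * m ≤ 2 ^ m := by
  intro m
  induction m with
  | zero => omega
  | succ k ih =>
    intro _
    rcases Nat.eq_zero_or_pos k with rfl | hk
    · norm_num
    · have h1 := ih hk
      have h2 := two_le_two_pow' hk
      rw [pow_succ]
      omega

lemma tau_mono {t : ℕ} : ∀ {i j}, i ≤ j → tau i t ≤ tau j t := by
  intro i j hij
  induction j with
  | zero => simp_all
  | succ k ih =>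
    rcases Nat.lt_succ_iff_lt_or_eq.1 (Nat.lt_succ_of_le hij) with h | h
    · refine le_trans (ih (by omega)) ?_
      show tau k t ≤ 2 ^ tau k t
      exact le_of_lt (Nat.lt_two_pow_self ..)
    · exact h ▸ le_refl _

lemma mseq_tau_bound {a s : ℕ} (ha : 1 ≤ a) (hs : 1 ≤ s) :
    ∀ i, 2 * mseq a i ≤ tau i (2 * a + s - 1) := by
  intro i
  induction i with
  | zero => show 2 * a ≤ 2 * a + s - 1; omega
  | succ j ih =>
    show 2 * (2 ^ mseq a j * mseq a j) ≤ 2 ^ tau j (2 * a + s - 1)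
    have h1 : 1 ≤ mseq a j := (mseq_lt_succ ha j).1
    have h2 : 2 * mseq a j ≤ 2 ^ mseq a j := two_mul_le_two_pow h1
    calc 2 * (2 ^ mseq a j * mseq a j) = 2 ^ mseq a j * (2 * mseq a j) := by ring
      _ ≤ 2 ^ mseq a j * 2 ^ mseq a j := Nat.mul_le_mul_left _ h2
      _ = 2 ^ (2 * mseq a j) := by rw [← pow_add]; ring_nf
      _ ≤ 2 ^ tau j (2 * a + s - 1) := Nat.pow_le_pow_right (by norm_num) ih

theorem stmt6 (a s : ℕ) (ha : 0 < a) (hs : 0 < s) :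
    ∃ F : Fin s → Finset ℕ,
      (∀ i, IsFull MemS2 (F i)) ∧
      (∀ i j : Fin s, i < j → FinsetLT (F i) (F j)) ∧
      (∀ i, F i ⊆ Finset.Icc a (tau s (2 * a + s - 1) - 1)) := by
  refine ⟨fun i => Icc (mseq a i) (mseq a (i + 1) - 1), ?_, ?_, ?_⟩
  · intro i
    have h1 : 1 ≤ mseq a i := (mseq_lt_succ ha i).1
    exact interval_full h1
  · intro i j hij x hx y hy
    rw [Finset.mem_Icc] at hx hy
    have h1 : mseq a (i + 1) ≤ mseq a (j : ℕ) := mseq_mono ha (by omega)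
    have h2 : 1 ≤ mseq a (i + 1) := (mseq_lt_succ ha (i + 1)).1
    omega
  · intro i x hx
    rw [Finset.mem_Icc] at hx ⊢
    have h1 : a ≤ mseq a i := by
      have : mseq a 0 = a := rfl
      calc a = mseq a 0 := rfl
        _ ≤ mseq a i := mseq_mono ha (by omega)
    have h2 : 2 * mseq a (i + 1) ≤ tau (i + 1) (2 * a + s - 1) := mseq_tau_bound ha hs (i + 1)
    have h3 : tau (i + 1) (2 * a + s - 1) ≤ tau s (2 * a + s - 1) := tau_mono (by omega)
    have h4 : 1 ≤ mseq a (i + 1) := (mseq_lt_succ ha (i + 1)).1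
    omega
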